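/- Let e, f, g be star expressions with ¬f↓ and let Γ = {e = f·e + g}. Then e is the principal value of a (Mil⁻ + Γ)-provable solution of the 1-chart interpretation of f*·g. Concretely, the function s defined on the vertices of the 1-chart interpretation of f*·g by s(f*·g) := e, s((F ⋆ f*)·g) := π(F)·e for iterated 1-derivatives F of f, and s(G) := π(G) for iterated 1-derivatives G of g, satisfies at every vertex E the condition s(E) =_{Mil⁻+Γ} τ(E) + Σ_{(ā,E') ∈ A∂₁(E)} ā · s(E'). -/

import Mathlib

namespace RegEx

/-- Star expressions over an action alphabet `A`. -/
inductive StExp (A : Type) : Type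
  | zero : StExp A
  | one : StExp A
  | act : A → StExp A
  | add : StExp A → StExp A → StExp A
  | mul : StExp A → StExp A → StExp A
  | star : StExp A → StExp A
  deriving DecidableEq

instance {A : Type} : Zero (StExp A) := ⟨StExp.zero⟩
instance {A : Type} : One (StExp A) := ⟨StExp.one⟩
instance {A : Type} : Add (StExp A) := ⟨StExp.add⟩
instance {A : Type} : Mul (StExp A) := ⟨StExp.mul⟩

/-- Immediate termination `e↓`. -/
inductive Term {A : Type} : StExp A → Prop
  | one : Term 1
  | addL {e f : StExp A} : Term e → Term (e + f)
  | addR {e f : StExp A} : Term f → Term (e + f)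
  | mul {e f : StExp A} : Term e → Term f → Term (e * f)
  | star (e : StExp A) : Term e.star

/-- The SOS transition relation `e —a→ e'`. -/
inductive Step {A : Type} : StExp A → A → StExp A → Prop
  | act (a : A) : Step (StExp.act a) a 1
  | addL {e1 e2 : StExp A} {a : A} {e' : StExp A} : Step e1 a e' → Step (e1 + e2) a e'
  | addR {e1 e2 : StExp A} {a : A} {e' : StExp A} : Step e2 a e' → Step (e1 + e2) a e'
  | mulL {e1 e2 : StExp A} {a : A} {e1' : StExp A} :
      Step e1 a e1' → Step (e1 * e2) a (e1' * e2)
  | mulR {e1 e2 : StExp A} {a : A} {e2' : StExp A} :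
      Term e1 → Step e2 a e2' → Step (e1 * e2) a e2'
  | star {e : StExp A} {a : A} {e' : StExp A} :
      Step e a e' → Step e.star a (e' * e.star)

/-- Boolean immediate-termination test. -/
def termB {A : Type} : StExp A → Bool
  | .zero => false
  | .one => true
  | .act _ => false
  | .add e f => termB e || termB f
  | .mul e f => termB e && termB f
  | .star _ => true

/-- Star height. -/
def sh {A : Type} : StExp A → ℕ
  | .zero => 0
  | .one => 0
  | .act _ => 0
  | .add e f => max (sh e) (sh f)
  | .mul e f => max (sh e) (sh f)
  | .star e => sh e + 1

/-- The axioms of Milner's purely equational system `Mil⁻`. -/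
inductive MilAx {A : Type} : StExp A → StExp A → Prop
  | assocAdd (e f g : StExp A) : MilAx ((e + f) + g) (e + (f + g))
  | addZero (e : StExp A) : MilAx (e + 0) e
  | commAdd (e f : StExp A) : MilAx (e + f) (f + e)
  | idemAdd (e : StExp A) : MilAx (e + e) e
  | assocMul (e f g : StExp A) : MilAx ((e * f) * g) (e * (f * g))
  | rdistr (e f g : StExp A) : MilAx ((e + f) * g) (e * g + f * g)
  | oneMul (e : StExp A) : MilAx (1 * e) e
  | mulOne (e : StExp A) : MilAx (e * 1) e
  | zeroMul (e : StExp A) : MilAx (0 * e) 0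
  | recStar (e : StExp A) : MilAx e.star (1 + e * e.star)
  | trmBody (e : StExp A) : MilAx e.star (1 + e).star

/-- The ACI axioms for `+`. -/
inductive ACIAx {A : Type} : StExp A → StExp A → Prop
  | assoc (e f g : StExp A) : ACIAx ((e + f) + g) (e + (f + g))
  | comm (e f : StExp A) : ACIAx (e + f) (f + e)
  | idem (e : StExp A) : ACIAx (e + e) e

/-- Equational-logic derivability from a set of axioms `ax`. -/
inductive EqDeriv {A : Type} (ax : StExp A → StExp A → Prop) : StExp A → StExp A → Prop
  | ax {e f : StExp A} : ax e f → EqDeriv ax e f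
  | refl (e : StExp A) : EqDeriv ax e e
  | symm {e f : StExp A} : EqDeriv ax e f → EqDeriv ax f e
  | trans {e f g : StExp A} : EqDeriv ax e f → EqDeriv ax f g → EqDeriv ax e g
  | addCongr {e1 f1 e2 f2 : StExp A} :
      EqDeriv ax e1 f1 → EqDeriv ax e2 f2 → EqDeriv ax (e1 + e2) (f1 + f2)
  | mulCongr {e1 f1 e2 f2 : StExp A} :
      EqDeriv ax e1 f1 → EqDeriv ax e2 f2 → EqDeriv ax (e1 * e2) (f1 * f2)
  | starCongr {e f : StExp A} : EqDeriv ax e f → EqDeriv ax e.star f.star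

/-- Derivability in `Mil⁻`. -/
def MilMinus {A : Type} : StExp A → StExp A → Prop := EqDeriv MilAx

/-- Milner's system `Mil = Mil⁻ + RSP*`. -/
inductive Mil {A : Type} : StExp A → StExp A → Prop
  | ax {e f : StExp A} : MilAx e f → Mil e f
  | refl (e : StExp A) : Mil e e
  | symm {e f : StExp A} : Mil e f → Mil f e
  | trans {e f g : StExp A} : Mil e f → Mil f g → Mil e g
  | addCongr {e1 f1 e2 f2 : StExp A} : Mil e1 f1 → Mil e2 f2 → Mil (e1 + e2) (f1 + f2)
  | mulCongr {e1 f1 e2 f2 : StExp A} : Mil e1 f1 → Mil e2 f2 → Mil (e1 * e2) (f1 * f2)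
  | starCongr {e f : StExp A} : Mil e f → Mil e.star f.star
  | rsp {e f g : StExp A} : Mil e (f * e + g) → ¬ Term f → Mil e (f.star * g)

/-- The variant system `Mil' = Mil⁻ + USP*`. -/
inductive Mil' {A : Type} : StExp A → StExp A → Prop
  | ax {e f : StExp A} : MilAx e f → Mil' e f
  | refl (e : StExp A) : Mil' e e
  | symm {e f : StExp A} : Mil' e f → Mil' f e
  | trans {e f g : StExp A} : Mil' e f → Mil' f g → Mil' e g
  | addCongr {e1 f1 e2 f2 : StExp A} : Mil' e1 f1 → Mil' e2 f2 → Mil' (e1 + e2) (f1 + f2)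
  | mulCongr {e1 f1 e2 f2 : StExp A} : Mil' e1 f1 → Mil' e2 f2 → Mil' (e1 * e2) (f1 * f2)
  | starCongr {e f : StExp A} : Mil' e f → Mil' e.star f.star
  | usp {e1 e2 f g : StExp A} :
      Mil' e1 (f * e1 + g) → Mil' e2 (f * e2 + g) → ¬ Term f → Mil' e1 e2

/-- Sum of a list of star expressions (empty sum is `0`). -/
def listSum {A : Type} : List (StExp A) → StExp A
  | [] => 0
  | e :: l => listSum l + e

/-- Star expression denoted by a transition label in `A ∪ {1}`. -/
def lab {A : Type} : Option A → StExp A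
  | none => 1
  | some a => StExp.act a

/-- Antimirov's partial derivatives. -/
def pderiv {A : Type} [DecidableEq A] (a : A) : StExp A → Finset (StExp A)
  | .zero => ∅
  | .one => ∅
  | .act b => if b = a then {1} else ∅
  | .add e1 e2 => pderiv a e1 ∪ pderiv a e2
  | .mul e1 e2 =>
      if termB e1 then (pderiv a e1).image (· * e2) ∪ pderiv a e2
      else (pderiv a e1).image (· * e2)
  | .star e => (pderiv a e).image (· * e.star)

/-- The set of action derivatives `A∂(e)`. -/
def AD {A : Type} (e : StExp A) : Set (A × StExp A) := {p | Step e p.1 p.2}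

/-- A bisimulation w.r.t. the SOS semantics of star expressions. -/
def IsBisim {A : Type} (B : StExp A → StExp A → Prop) : Prop :=
  ∀ u v, B u v →
    (∀ (a : A) u', Step u a u' → ∃ v', Step v a v' ∧ B u' v') ∧
    (∀ (a : A) v', Step v a v' → ∃ u', Step u a u' ∧ B u' v') ∧
    (Term u ↔ Term v)

/-- Bisimilarity of the process interpretations of two star expressions. -/
def Bisim {A : Type} (e f : StExp A) : Prop := ∃ B, IsBisim B ∧ B e f

/-! ### 1-charts with entry/body-labelled transitions -/

/-- Data of a (level-labelled) 1-chart: transitions carry an action label in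
`A ∪ {1}` (`none` = the empty-step label `1`) and a marking level in `ℕ`
(`0` = body transition, positive = loop-entry transition). -/
structure ChartData (A V : Type) where
  start : V
  tr : V → Option A → ℕ → V → Prop
  term : V → Bool

namespace ChartData

variable {A V : Type}

def anyStep (C : ChartData A V) (x y : V) : Prop := ∃ l n, C.tr x l n y

def bodyStep (C : ChartData A V) (x y : V) : Prop := ∃ l, C.tr x l 0 y

def oneTr (C : ChartData A V) (x y : V) : Prop := ∃ n, C.tr x none n y

/-- Termination constant of the chart at a vertex. -/
def tau (C : ChartData A V) (v : V) : StExp A := if C.term v then 1 else 0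

/-- Weakly guarded: no cycle of 1-transitions. -/
def WeaklyGuarded (C : ChartData A V) : Prop :=
  ∀ v, ¬ Relation.TransGen C.oneTr v v

/-- The entry/body labelling is guarded: loop-entry transitions carry proper labels. -/
def GuardedW (C : ChartData A V) : Prop :=
  ∀ v n w, 0 < n → ¬ C.tr v none n w

/-- (w1): no cycle of body transitions. -/
def W1 (C : ChartData A V) : Prop :=
  ∀ v, ¬ Relation.TransGen C.bodyStep v v

def AvoidStep (C : ChartData A V) (v x y : V) : Prop := C.anyStep x y ∧ y ≠ v

/-- (w2a): from the target of a loop-entry transition of level `n` at `v`, as long as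
`v` is not yet revisited, all transitions taken have level `< n`. -/
def W2a (C : ChartData A V) : Prop :=
  ∀ v n l w, 0 < n → C.tr v l n w → w ≠ v →
    ∀ x, Relation.ReflTransGen (C.AvoidStep v) w x →
      ∀ l' m y, C.tr x l' m y → y ≠ v → m < n

/-- (w2b): every infinite path from the target of a loop-entry transition at `v`
returns to `v`. -/
def W2b (C : ChartData A V) : Prop :=
  ∀ v n l w, 0 < n → C.tr v l n w →
    ∀ p : ℕ → V, p 0 = w → (∀ i, C.anyStep (p i) (p (i + 1))) → ∃ i, p i = v

/-- The entry/body labelling is a layered LEE-witness. -/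
def IsLLEE (C : ChartData A V) : Prop := C.W1 ∧ C.W2a ∧ C.W2b

/-- Body path avoiding the vertex `v`. -/
def BodyAvoid (C : ChartData A V) (v : V) (x y : V) : Prop :=
  Relation.ReflTransGen (fun x y => C.bodyStep x y ∧ y ≠ v) x y

/-- `C.InLoop v w`: `w` is in the body of the loop at `v` (`v ↘ w`, i.e. `w ↘⁻ v`). -/
def InLoop (C : ChartData A V) (v w : V) : Prop :=
  ∃ n l v', 0 < n ∧ C.tr v l n v' ∧ v' ≠ v ∧ C.BodyAvoid v v' w

end ChartData

/-- An LLEE-witnessed coinductive proof over the system `Mil⁻`-style equational logic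
with axioms `ax`, of the equation `e1 = e2`. -/
structure LCoProof (A : Type) (ax : StExp A → StExp A → Prop) (e1 e2 : StExp A) where
  V : Type
  fin : Finite V
  C : ChartData A V
  reach : ∀ v, Relation.ReflTransGen C.anyStep C.start v
  wg : C.WeaklyGuarded
  llee : C.IsLLEE
  L1 : V → StExp A
  L2 : V → StExp A
  trs : V → List (Option A × V)
  trs_spec : ∀ v p, p ∈ trs v ↔ ∃ n, C.tr v p.1 n p.2
  trs_nodup : ∀ v, (trs v).Nodup
  sol1 : ∀ v, EqDeriv ax (L1 v)
    (C.tau v + listSum ((trs v).map fun p => lab p.1 * L1 p.2))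
  sol2 : ∀ v, EqDeriv ax (L2 v)
    (C.tau v + listSum ((trs v).map fun p => lab p.1 * L2 p.2))
  start1 : L1 C.start = e1
  start2 : L2 C.start = e2

/-- The coinductive variant `cMil` of Milner's system: equational logic with the
axioms of `Mil⁻` and the rule scheme `LCP_n`. -/
inductive CMil {A : Type} : StExp A → StExp A → Prop
  | ax {e f : StExp A} : MilAx e f → CMil e f
  | refl (e : StExp A) : CMil e e
  | symm {e f : StExp A} : CMil e f → CMil f e
  | trans {e f g : StExp A} : CMil e f → CMil f g → CMil e g
  | addCongr {e1 f1 e2 f2 : StExp A} : CMil e1 f1 → CMil e2 f2 → CMil (e1 + e2) (f1 + f2)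
  | mulCongr {e1 f1 e2 f2 : StExp A} : CMil e1 f1 → CMil e2 f2 → CMil (e1 * e2) (f1 * f2)
  | starCongr {e f : StExp A} : CMil e f → CMil e.star f.star
  | lcp {e f : StExp A} (Γ : List (StExp A × StExp A)) :
      (∀ p ∈ Γ, CMil p.1 p.2) →
      Nonempty (LCoProof A (fun x y => MilAx x y ∨ (x, y) ∈ Γ) e f) →
      CMil e f

/-! ### Stacked star expressions and the 1-chart interpretation -/

/-- Star expressions extended with the stacked product `⋆` (constructor `smul`). -/
inductive SExp (A : Type) : Type
  | zero : SExp A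
  | one : SExp A
  | act : A → SExp A
  | add : SExp A → SExp A → SExp A
  | mul : SExp A → SExp A → SExp A
  | star : SExp A → SExp A
  | smul : SExp A → SExp A → SExp A
  deriving DecidableEq

/-- Embedding of star expressions into stacked star expressions. -/
def emb {A : Type} : StExp A → SExp A
  | .zero => .zero
  | .one => .one
  | .act a => .act a
  | .add e f => .add (emb e) (emb f)
  | .mul e f => .mul (emb e) (emb f)
  | .star e => .star (emb e)

/-- The projection `π` replacing stacked products by ordinary products. -/
def proj {A : Type} : SExp A → StExp A
  | .zero => 0
  | .one => 1
  | .act a => StExp.act a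
  | .add e f => proj e + proj f
  | .mul e f => proj e * proj f
  | .star e => (proj e).star
  | .smul e f => proj e * proj f

/-- Immediate termination for stacked star expressions (no termination at `⋆`). -/
inductive STerm {A : Type} : SExp A → Prop
  | one : STerm SExp.one
  | addL {e f : SExp A} : STerm e → STerm (SExp.add e f)
  | addR {e f : SExp A} : STerm f → STerm (SExp.add e f)
  | mul {e f : SExp A} : STerm e → STerm f → STerm (SExp.mul e f)
  | star (e : SExp A) : STerm (SExp.star e)

/-- Boolean immediate-termination test for stacked star expressions. -/
def sTermB {A : Type} : SExp A → Bool
  | .zero => false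
  | .one => true
  | .act _ => false
  | .add e f => sTermB e || sTermB f
  | .mul e f => sTermB e && sTermB f
  | .star _ => true
  | .smul _ _ => false

/-- Termination constant of a stacked star expression. -/
def sTau {A : Type} (E : SExp A) : StExp A := if sTermB E then 1 else 0

/-- The TSS of the 1-chart interpretation: transitions between stacked star
expressions, labelled by `A ∪ {1}` (`none` is the empty-step label `1`). -/
inductive SStep {A : Type} : SExp A → Option A → SExp A → Prop
  | act (a : A) : SStep (SExp.act a) (some a) SExp.one
  | addL {e1 e2 : SExp A} {a : A} {E' : SExp A} :
      SStep e1 (some a) E' → SStep (SExp.add e1 e2) (some a) E'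
  | addR {e1 e2 : SExp A} {a : A} {E' : SExp A} :
      SStep e2 (some a) E' → SStep (SExp.add e1 e2) (some a) E'
  | mulL {E1 e2 : SExp A} {l : Option A} {E1' : SExp A} :
      SStep E1 l E1' → SStep (SExp.mul E1 e2) l (SExp.mul E1' e2)
  | mulR {e1 e2 : SExp A} {a : A} {E2' : SExp A} :
      STerm e1 → SStep e2 (some a) E2' → SStep (SExp.mul e1 e2) (some a) E2'
  | star {e : SExp A} {a : A} {E' : SExp A} :
      SStep e (some a) E' → SStep (SExp.star e) (some a) (SExp.smul E' (SExp.star e))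
  | smulL {E1 f : SExp A} {l : Option A} {E1' : SExp A} :
      SStep E1 l E1' → SStep (SExp.smul E1 f) l (SExp.smul E1' f)
  | smulT {E1 f : SExp A} : STerm E1 → SStep (SExp.smul E1 f) none f

/-- One transition step (any label) between stacked star expressions. -/
def sR {A : Type} (X Y : SExp A) : Prop := ∃ l, SStep X l Y

section Statement14Aux


variable {A : Type}

/-! ### Basic facts about `emb`, `proj`, termination tests -/

lemma proj_emb (h : StExp A) : proj (emb h) = h := by
  induction h with
  | zero => rfl
  | one => rfl
  | act a => rfl
  | add e1 e2 ih1 ih2 => show proj (emb e1) + proj (emb e2) = _; rw [ih1, ih2]; rfl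
  | mul e1 e2 ih1 ih2 => show proj (emb e1) * proj (emb e2) = _; rw [ih1, ih2]; rfl
  | star e1 ih => show (proj (emb e1)).star = _; rw [ih]

lemma emb_inj {a b : StExp A} (h : emb a = emb b) : a = b := by
  have := congrArg proj h
  rwa [proj_emb, proj_emb] at this

lemma termB_iff : ∀ {e : StExp A}, termB e = true ↔ Term e := by
  intro e
  induction e with
  | zero => exact ⟨fun h => by simp [termB] at h, fun h => by cases h⟩
  | one => exact ⟨fun _ => Term.one, fun _ => rfl⟩
  | act a => exact ⟨fun h => by simp [termB] at h, fun h => by cases h⟩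
  | add e1 e2 ih1 ih2 =>
      simp only [termB, Bool.or_eq_true, ih1, ih2]
      constructor
      · rintro (h | h)
        exacts [Term.addL h, Term.addR h]
      · intro h
        cases h with
        | addL h => exact Or.inl h
        | addR h => exact Or.inr h
  | mul e1 e2 ih1 ih2 =>
      simp only [termB, Bool.and_eq_true, ih1, ih2]
      constructor
      · rintro ⟨h1, h2⟩; exact Term.mul h1 h2
      · intro h
        cases h with
        | mul h1 h2 => exact ⟨h1, h2⟩
  | star e ih => exact ⟨fun _ => Term.star e, fun _ => rfl⟩

lemma sTermB_iff : ∀ {E : SExp A}, sTermB E = true ↔ STerm E := by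
  intro E
  induction E with
  | zero => exact ⟨fun h => by simp [sTermB] at h, fun h => by cases h⟩
  | one => exact ⟨fun _ => STerm.one, fun _ => rfl⟩
  | act a => exact ⟨fun h => by simp [sTermB] at h, fun h => by cases h⟩
  | add e1 e2 ih1 ih2 =>
      simp only [sTermB, Bool.or_eq_true, ih1, ih2]
      constructor
      · rintro (h | h)
        exacts [STerm.addL h, STerm.addR h]
      · intro h
        cases h with
        | addL h => exact Or.inl h
        | addR h => exact Or.inr h
  | mul e1 e2 ih1 ih2 =>
      simp only [sTermB, Bool.and_eq_true, ih1, ih2]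
      constructor
      · rintro ⟨h1, h2⟩; exact STerm.mul h1 h2
      · intro h
        cases h with
        | mul h1 h2 => exact ⟨h1, h2⟩
  | star e ih => exact ⟨fun _ => STerm.star e, fun _ => rfl⟩
  | smul E1 f ih1 ih2 => exact ⟨fun h => by simp [sTermB] at h, fun h => by cases h⟩

lemma sTermB_emb (h : StExp A) : sTermB (emb h) = termB h := by
  induction h <;> simp [emb, sTermB, termB, *]

/-- A size function on star expressions. -/
def szSt : StExp A → Nat
  | .zero => 1
  | .one => 1
  | .act _ => 1
  | .add e1 e2 => szSt e1 + szSt e2 + 1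
  | .mul e1 e2 => szSt e1 + szSt e2 + 1
  | .star e => szSt e + 1

/-! ### Equational helpers -/

section EqHelpers

variable {ax : StExp A → StExp A → Prop}

lemma eMil (hax : ∀ x y : StExp A, MilAx x y → ax x y) {x y : StExp A} (h : MilAx x y) :
    EqDeriv ax x y := .ax (hax _ _ h)

lemma eAssoc (hax : ∀ x y : StExp A, MilAx x y → ax x y) (x y z : StExp A) :
    EqDeriv ax ((x + y) + z) (x + (y + z)) := eMil hax (.assocAdd x y z)

lemma eComm (hax : ∀ x y : StExp A, MilAx x y → ax x y) (x y : StExp A) :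
    EqDeriv ax (x + y) (y + x) := eMil hax (.commAdd x y)

lemma eIdem (hax : ∀ x y : StExp A, MilAx x y → ax x y) (x : StExp A) :
    EqDeriv ax (x + x) x := eMil hax (.idemAdd x)

lemma eAddZero (hax : ∀ x y : StExp A, MilAx x y → ax x y) (x : StExp A) :
    EqDeriv ax (x + 0) x := eMil hax (.addZero x)

lemma eZeroAdd (hax : ∀ x y : StExp A, MilAx x y → ax x y) (x : StExp A) :
    EqDeriv ax (0 + x) x := (eComm hax 0 x).trans (eAddZero hax x)

lemma eSwapRight (hax : ∀ x y : StExp A, MilAx x y → ax x y) (x y z : StExp A) :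
    EqDeriv ax ((x + y) + z) ((x + z) + y) :=
  (eAssoc hax x y z).trans ((EqDeriv.addCongr (.refl x) (eComm hax y z)).trans (eAssoc hax x z y).symm)

lemma eShift (hax : ∀ x y : StExp A, MilAx x y → ax x y) (x t y : StExp A) :
    EqDeriv ax (x + (t + y)) (t + (x + y)) :=
  (eAssoc hax x t y).symm.trans ((EqDeriv.addCongr (eComm hax x t) (.refl y)).trans (eAssoc hax t x y))

lemma ePull (hax : ∀ x y : StExp A, MilAx x y → ax x y) (t x y : StExp A) :
    EqDeriv ax ((t + x) + y) (t + (y + x)) :=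
  (eAssoc hax t x y).trans (EqDeriv.addCongr (.refl t) (eComm hax x y))

lemma sum_mem (hax : ∀ x y : StExp A, MilAx x y → ax x y) {x : StExp A} :
    ∀ {L : List (StExp A)}, x ∈ L → EqDeriv ax (listSum L) (listSum L + x) := by
  intro L hx
  induction L with
  | nil => exact absurd hx List.not_mem_nil
  | cons y t ih =>
    rcases List.mem_cons.mp hx with rfl | hx'
    · exact ((eAssoc hax _ _ _).trans (EqDeriv.addCongr (.refl _) (eIdem hax _))).symm
    · exact (EqDeriv.addCongr (ih hx') (.refl _)).trans (eSwapRight hax _ _ _)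

lemma sum_subset (hax : ∀ x y : StExp A, MilAx x y → ax x y) :
    ∀ {L1 L2 : List (StExp A)}, (∀ x ∈ L1, x ∈ L2) →
      EqDeriv ax (listSum L2) (listSum L2 + listSum L1) := by
  intro L1 L2 h
  induction L1 with
  | nil => exact (eAddZero hax _).symm
  | cons x t ih =>
    exact (sum_mem hax (h x List.mem_cons_self)).trans
      ((EqDeriv.addCongr (ih fun y hy => h y (List.mem_cons_of_mem x hy)) (.refl x)).trans
        (eAssoc hax _ _ _))

lemma sum_memEq (hax : ∀ x y : StExp A, MilAx x y → ax x y) {L1 L2 : List (StExp A)}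
    (h : ∀ x, x ∈ L1 ↔ x ∈ L2) : EqDeriv ax (listSum L1) (listSum L2) := by
  have h12 : EqDeriv ax (listSum L2) (listSum L2 + listSum L1) :=
    sum_subset hax fun x hx => (h x).mp hx
  have h21 : EqDeriv ax (listSum L1) (listSum L1 + listSum L2) :=
    sum_subset hax fun x hx => (h x).mpr hx
  exact h21.trans ((eComm hax _ _).trans h12.symm)

lemma sum_append (hax : ∀ x y : StExp A, MilAx x y → ax x y) :
    ∀ (L1 L2 : List (StExp A)), EqDeriv ax (listSum (L1 ++ L2)) (listSum L1 + listSum L2) := by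
  intro L1 L2
  induction L1 with
  | nil => exact (eZeroAdd hax _).symm
  | cons x t ih => exact (EqDeriv.addCongr ih (.refl x)).trans (eSwapRight hax _ _ _)

lemma sum_map_congr (hax : ∀ x y : StExp A, MilAx x y → ax x y) {α : Type} {l : List α}
    {F G : α → StExp A} (h : ∀ p ∈ l, EqDeriv ax (F p) (G p)) :
    EqDeriv ax (listSum (l.map F)) (listSum (l.map G)) := by
  induction l with
  | nil => exact .refl _
  | cons x t ih =>
      exact EqDeriv.addCongr (ih fun p hp => h p (List.mem_cons_of_mem x hp))
        (h x List.mem_cons_self)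

lemma sum_map_distr (hax : ∀ x y : StExp A, MilAx x y → ax x y) {α : Type} (l : List α)
    (F : α → StExp A) (c : StExp A) :
    EqDeriv ax (listSum (l.map F) * c) (listSum (l.map fun p => F p * c)) := by
  induction l with
  | nil => exact eMil hax (.zeroMul c)
  | cons x t ih => exact (eMil hax (.rdistr _ _ c)).trans (EqDeriv.addCongr ih (.refl _))

lemma eTauAdd (hax : ∀ x y : StExp A, MilAx x y → ax x y) (b1 b2 : Bool) (X Y : StExp A) :
    EqDeriv ax (((if b1 then (1:StExp A) else 0) + X) + ((if b2 then (1:StExp A) else 0) + Y))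
      ((if (b1 || b2) then (1:StExp A) else 0) + (X + Y)) := by
  cases b1 <;> cases b2 <;>
    simp only [Bool.false_or, Bool.true_or, Bool.or_true, Bool.or_false, if_true, if_false,
      Bool.false_eq_true, ite_true, ite_false]
  · exact (EqDeriv.addCongr (eZeroAdd hax X) (eZeroAdd hax Y)).trans (eZeroAdd hax _).symm
  · exact (EqDeriv.addCongr (eZeroAdd hax X) (.refl _)).trans (eShift hax X 1 Y)
  · exact (EqDeriv.addCongr (.refl _) (eZeroAdd hax Y)).trans (eAssoc hax 1 X Y)
  · refine (eAssoc hax 1 X _).trans ?_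
    refine (EqDeriv.addCongr (.refl (1:StExp A)) (eShift hax X 1 Y)).trans ?_
    refine (eAssoc hax 1 1 _).symm.trans ?_
    exact EqDeriv.addCongr (eIdem hax 1) (.refl _)

end EqHelpers



/-! ### The canonical transition list -/

/-- Canonical list of transitions of a stacked star expression. -/
def strans : SExp A → List (Option A × SExp A)
  | .zero => []
  | .one => []
  | .act a => [(some a, SExp.one)]
  | .add e1 e2 => ((strans e1) ++ (strans e2)).filter (fun p => p.1.isSome)
  | .mul e1 e2 =>
      ((strans e1).map fun p => (p.1, SExp.mul p.2 e2)) ++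
        (if sTermB e1 then (strans e2).filter (fun p => p.1.isSome) else [])
  | .star e => (((strans e).filter (fun p => p.1.isSome)).map fun p => (p.1, SExp.smul p.2 (SExp.star e)))
  | .smul E1 f => ((strans E1).map fun p => (p.1, SExp.smul p.2 f)) ++
      (if sTermB E1 then [(none, f)] else [])

lemma strans_complete {E : SExp A} {l : Option A} {E' : SExp A} (h : SStep E l E') :
    (l, E') ∈ strans E := by
  induction h with
  | act a => simp [strans]
  | addL h ih =>
      simp only [strans, List.mem_filter, List.mem_append]
      exact ⟨Or.inl ih, rfl⟩
  | addR h ih =>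
      simp only [strans, List.mem_filter, List.mem_append]
      exact ⟨Or.inr ih, rfl⟩
  | mulL h ih =>
      simp only [strans]
      exact List.mem_append_left _ (List.mem_map.mpr ⟨_, ih, rfl⟩)
  | mulR ht h ih =>
      simp only [strans]
      refine List.mem_append_right _ ?_
      rw [if_pos (sTermB_iff.mpr ht)]
      exact List.mem_filter.mpr ⟨ih, rfl⟩
  | star h ih =>
      simp only [strans]
      exact List.mem_map.mpr ⟨_, List.mem_filter.mpr ⟨ih, rfl⟩, rfl⟩
  | smulL h ih =>
      simp only [strans]
      exact List.mem_append_left _ (List.mem_map.mpr ⟨_, ih, rfl⟩)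
  | smulT ht =>
      simp only [strans]
      refine List.mem_append_right _ ?_
      rw [if_pos (sTermB_iff.mpr ht)]
      exact List.mem_singleton.mpr rfl

lemma strans_sound (E : SExp A) : ∀ p ∈ strans E, SStep E p.1 p.2 := by
  induction E with
  | zero => intro p hp; simp [strans] at hp
  | one => intro p hp; simp [strans] at hp
  | act a =>
      intro p hp
      simp only [strans, List.mem_singleton] at hp
      subst hp
      exact SStep.act a
  | add e1 e2 ih1 ih2 =>
      rintro ⟨l0, E0⟩ hp
      simp only [strans, List.mem_filter, List.mem_append] at hp
      obtain ⟨hmem, hsome⟩ := hp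
      obtain ⟨a, rfl⟩ := Option.isSome_iff_exists.mp hsome
      rcases hmem with h | h
      · exact SStep.addL (ih1 _ h)
      · exact SStep.addR (ih2 _ h)
  | mul e1 e2 ih1 ih2 =>
      rintro ⟨l0, E0⟩ hp
      simp only [strans, List.mem_append] at hp
      rcases hp with h | h
      · obtain ⟨⟨l1, E1⟩, hq, heq⟩ := List.mem_map.mp h
        cases heq
        exact SStep.mulL (ih1 _ hq)
      · cases hb : sTermB e1 with
        | false => rw [hb, if_neg (by simp)] at h; simp at h
        | true =>
            rw [hb, if_pos rfl] at h
            obtain ⟨hq, hsome⟩ := List.mem_filter.mp h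
            obtain ⟨a, rfl⟩ := Option.isSome_iff_exists.mp hsome
            exact SStep.mulR (sTermB_iff.mp hb) (ih2 _ hq)
  | star e ih =>
      rintro ⟨l0, E0⟩ hp
      simp only [strans] at hp
      obtain ⟨⟨l1, E1⟩, hq, heq⟩ := List.mem_map.mp hp
      cases heq
      obtain ⟨hq', hsome⟩ := List.mem_filter.mp hq
      obtain ⟨a, rfl⟩ := Option.isSome_iff_exists.mp hsome
      exact SStep.star (ih _ hq')
  | smul E1 f ih1 ih2 =>
      rintro ⟨l0, E0⟩ hp
      simp only [strans, List.mem_append] at hp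
      rcases hp with h | h
      · obtain ⟨⟨l1, E1'⟩, hq, heq⟩ := List.mem_map.mp h
        cases heq
        exact SStep.smulL (ih1 _ hq)
      · cases hb : sTermB E1 with
        | false => rw [hb, if_neg (by simp)] at h; simp at h
        | true =>
            rw [hb, if_pos rfl] at h
            rw [List.mem_singleton] at h
            cases h
            exact SStep.smulT (sTermB_iff.mp hb)

/-! ### Smul-free and head-form expressions -/

/-- No stacked product occurs. -/
def nsB : SExp A → Bool
  | .zero => true
  | .one => true
  | .act _ => true
  | .add e1 e2 => nsB e1 && nsB e2
  | .mul e1 e2 => nsB e1 && nsB e2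
  | .star e => nsB e
  | .smul _ _ => false

lemma nsB_emb (h : StExp A) : nsB (emb h) = true := by
  induction h <;> simp [emb, nsB, *]

lemma step_none {E E' : SExp A} {l : Option A} (h : SStep E l E') (hl : l = none) :
    nsB E = false := by
  induction h <;> simp_all [nsB]

lemma filter_eq_self_of_ns {E : SExp A} (h : nsB E = true) :
    (strans E).filter (fun p => p.1.isSome) = strans E := by
  refine List.filter_eq_self.mpr ?_
  rintro ⟨l0, E0⟩ hp
  cases l0 with
  | some a => rfl
  | none =>
      have hn := step_none (strans_sound E _ hp) rfl
      rw [hn] at h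
      cases h

/-- Head form: stacked products occur only along the leftmost spine. -/
inductive Hd : SExp A → Prop
  | pure {E : SExp A} : nsB E = true → Hd E
  | mul {E1 e2 : SExp A} : Hd E1 → nsB e2 = true → Hd (SExp.mul E1 e2)
  | smul {E1 f : SExp A} : Hd E1 → Hd (SExp.smul E1 f)

lemma hd_add {e1 e2 : SExp A} (h : Hd (SExp.add e1 e2)) : nsB e1 = true ∧ nsB e2 = true := by
  cases h with
  | pure hp => simpa [nsB, Bool.and_eq_true] using hp

lemma hd_mul {E1 e2 : SExp A} (h : Hd (SExp.mul E1 e2)) : Hd E1 ∧ nsB e2 = true := by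
  cases h with
  | pure hp =>
      simp only [nsB, Bool.and_eq_true] at hp
      exact ⟨Hd.pure hp.1, hp.2⟩
  | mul h1 h2 => exact ⟨h1, h2⟩

lemma hd_star {e : SExp A} (h : Hd (SExp.star e)) : nsB e = true := by
  cases h with
  | pure hp => simpa [nsB] using hp

lemma hd_smul {E1 f : SExp A} (h : Hd (SExp.smul E1 f)) : Hd E1 := by
  cases h with
  | pure hp => simp [nsB] at hp
  | smul h1 => exact h1

/-! ### Iterated derivatives of an embedded star expression -/

/-- `DerOf h D`: `D` belongs to the closed derivative grammar of `emb h`. -/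
inductive DerOf : StExp A → SExp A → Prop
  | base (h : StExp A) : DerOf h (emb h)
  | oneAct (a : A) : DerOf (StExp.act a) SExp.one
  | addL {h1 h2 : StExp A} {D : SExp A} : DerOf h1 D → DerOf (StExp.add h1 h2) D
  | addR {h1 h2 : StExp A} {D : SExp A} : DerOf h2 D → DerOf (StExp.add h1 h2) D
  | mulL {h1 h2 : StExp A} {D1 : SExp A} :
      DerOf h1 D1 → DerOf (StExp.mul h1 h2) (SExp.mul D1 (emb h2))
  | mulR {h1 h2 : StExp A} {D : SExp A} : DerOf h2 D → DerOf (StExp.mul h1 h2) D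
  | star {h1 : StExp A} {D1 : SExp A} :
      DerOf h1 D1 → DerOf (StExp.star h1) (SExp.smul D1 (SExp.star (emb h1)))

lemma step_emb : ∀ {h : StExp A} {l : Option A} {D' : SExp A},
    SStep (emb h) l D' → DerOf h D' := by
  intro h
  induction h with
  | zero => intro l D' hs; cases (show SStep SExp.zero l D' from hs)
  | one => intro l D' hs; cases (show SStep SExp.one l D' from hs)
  | act a =>
      intro l D' hs
      cases (show SStep (SExp.act a) l D' from hs) with
      | act => exact DerOf.oneAct a
  | add h1 h2 ih1 ih2 =>
      intro l D' hs
      cases (show SStep (SExp.add (emb h1) (emb h2)) l D' from hs) with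
      | addL hs1 => exact DerOf.addL (ih1 hs1)
      | addR hs2 => exact DerOf.addR (ih2 hs2)
  | mul h1 h2 ih1 ih2 =>
      intro l D' hs
      cases (show SStep (SExp.mul (emb h1) (emb h2)) l D' from hs) with
      | mulL hs1 => exact DerOf.mulL (ih1 hs1)
      | mulR ht hs2 => exact DerOf.mulR (ih2 hs2)
  | star h1 ih =>
      intro l D' hs
      cases (show SStep (SExp.star (emb h1)) l D' from hs) with
      | star hs1 => exact DerOf.star (ih hs1)

lemma derOf_step {h : StExp A} {D : SExp A} (hd : DerOf h D) :
    ∀ {l : Option A} {D' : SExp A}, SStep D l D' → DerOf h D' := by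
  induction hd with
  | base h => exact fun hs => step_emb hs
  | oneAct a => intro l D' hs; cases hs
  | addL _ ih => exact fun hs => DerOf.addL (ih hs)
  | addR _ ih => exact fun hs => DerOf.addR (ih hs)
  | mulL _ ih =>
      intro l D' hs
      cases hs with
      | mulL hs1 => exact DerOf.mulL (ih hs1)
      | mulR ht hs2 => exact DerOf.mulR (step_emb hs2)
  | mulR _ ih => exact fun hs => DerOf.mulR (ih hs)
  | star _ ih =>
      intro l D' hs
      cases hs with
      | smulL hs1 => exact DerOf.star (ih hs1)
      | smulT ht => exact DerOf.base (StExp.star _)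

lemma derOf_hd {h : StExp A} {D : SExp A} (hd : DerOf h D) : Hd D := by
  induction hd with
  | base h => exact Hd.pure (nsB_emb h)
  | oneAct a => exact Hd.pure rfl
  | addL _ ih => exact ih
  | addR _ ih => exact ih
  | mulL _ ih => exact Hd.mul ih (nsB_emb _)
  | mulR _ ih => exact ih
  | star _ ih => exact Hd.smul ih

lemma derOf_mul_tail {h : StExp A} {D : SExp A} (hd : DerOf h D) :
    ∀ {X Y : SExp A}, D = SExp.mul X Y → ∃ h2, Y = emb h2 ∧ szSt h2 < szSt h := by
  induction hd with
  | base h =>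
      intro X Y hE
      cases h with
      | zero => cases hE
      | one => cases hE
      | act a => cases hE
      | add h1 h2 => cases hE
      | star h1 => cases hE
      | mul h1 h2 =>
          cases hE
          exact ⟨h2, rfl, by simp [szSt]⟩
  | oneAct a => intro X Y hE; cases hE
  | addL _ ih =>
      intro X Y hE
      obtain ⟨h2', hY, hlt⟩ := ih hE
      exact ⟨h2', hY, lt_of_lt_of_le hlt (by simp [szSt]; omega)⟩
  | addR _ ih =>
      intro X Y hE
      obtain ⟨h2', hY, hlt⟩ := ih hE
      exact ⟨h2', hY, lt_of_lt_of_le hlt (by simp [szSt]; omega)⟩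
  | mulL _ _ =>
      intro X Y hE
      cases hE
      exact ⟨_, rfl, by simp [szSt]⟩
  | mulR _ ih =>
      intro X Y hE
      obtain ⟨h2', hY, hlt⟩ := ih hE
      exact ⟨h2', hY, lt_of_lt_of_le hlt (by simp [szSt]; omega)⟩
  | star _ _ => intro X Y hE; cases hE

/-! ### The fundamental expansion theorem for head-form expressions -/

theorem expansion {ax : StExp A → StExp A → Prop}
    (hax : ∀ x y : StExp A, MilAx x y → ax x y) (E : SExp A) : Hd E →
    EqDeriv ax (proj E) (sTau E + listSum ((strans E).map fun p => lab p.1 * proj p.2)) := by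
  induction E with
  | zero => intro _; exact (eZeroAdd hax _).symm
  | one => intro _; exact (eAddZero hax 1).symm
  | act a =>
      intro _
      exact ((eMil hax (.mulOne (StExp.act a))).symm.trans
        (eZeroAdd hax _).symm).trans (eZeroAdd hax _).symm
  | add e1 e2 ih1 ih2 =>
      intro hE
      obtain ⟨h1, h2⟩ := hd_add hE
      have hsE : strans (SExp.add e1 e2) = strans e1 ++ strans e2 := by
        simp only [strans, List.filter_append, filter_eq_self_of_ns h1, filter_eq_self_of_ns h2]
      have htau : sTau (SExp.add e1 e2) = if (sTermB e1 || sTermB e2) then (1:StExp A) else 0 := rfl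
      rw [hsE, htau, List.map_append]
      refine (EqDeriv.addCongr (ih1 (Hd.pure h1)) (ih2 (Hd.pure h2))).trans ?_
      refine (eTauAdd hax (sTermB e1) (sTermB e2) _ _).trans ?_
      exact EqDeriv.addCongr (.refl _) (sum_append hax _ _).symm
  | mul E1 e2 ih1 ih2 =>
      intro hE
      obtain ⟨hh1, h2⟩ := hd_mul hE
      have IH1 := ih1 hh1
      have IH2 := ih2 (Hd.pure h2)
      cases hb : sTermB E1 with
      | false =>
          have hsE : strans (SExp.mul E1 e2) =
              ((strans E1).map fun p => (p.1, SExp.mul p.2 e2)) := by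
            simp [strans, hb]
          have htau : sTau (SExp.mul E1 e2) = 0 := by simp [sTau, sTermB, hb]
          rw [hsE, htau, List.map_map]
          simp [sTau, hb] at IH1
          have IH1' := IH1.trans (eZeroAdd hax _)
          refine (EqDeriv.mulCongr IH1' (.refl (proj e2))).trans ?_
          refine ((sum_map_distr hax _ _ _).trans
            (sum_map_congr hax (G := fun (p : Option A × SExp A) => lab p.1 * (proj p.2 * proj e2))
              fun p _ => eMil hax (.assocMul _ _ _))).trans ?_
          exact (eZeroAdd hax _).symm
      | true =>
          have hsE : strans (SExp.mul E1 e2) =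
              ((strans E1).map fun p => (p.1, SExp.mul p.2 e2)) ++ strans e2 := by
            simp [strans, hb, filter_eq_self_of_ns h2]
          have htau : sTau (SExp.mul E1 e2) = sTau e2 := by
            simp [sTau, sTermB, hb]
          rw [hsE, htau, List.map_append, List.map_map]
          simp [sTau, hb] at IH1
          refine (EqDeriv.mulCongr IH1 (.refl (proj e2))).trans ?_
          refine (eMil hax (.rdistr 1 _ (proj e2))).trans ?_
          refine (EqDeriv.addCongr (eMil hax (.oneMul (proj e2)))
            ((sum_map_distr hax _ _ _).trans
              (sum_map_congr hax (G := fun (p : Option A × SExp A) => lab p.1 * (proj p.2 * proj e2))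
                fun p _ => eMil hax (.assocMul _ _ _)))).trans ?_
          refine (EqDeriv.addCongr IH2 (.refl _)).trans ?_
          refine (ePull hax _ _ _).trans ?_
          exact EqDeriv.addCongr (.refl _) (sum_append hax _ _).symm
  | star e ih =>
      intro hE
      have hns := hd_star hE
      have IH := ih (Hd.pure hns)
      have hsE : strans (SExp.star e) =
          ((strans e).map fun p => (p.1, SExp.smul p.2 (SExp.star e))) := by
        simp only [strans, filter_eq_self_of_ns hns]
      rw [hsE, List.map_map]
      have key : EqDeriv ax ((proj e).star)
          (1 + listSum ((strans e).map fun p => lab p.1 * proj p.2) * (proj e).star) := by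
        cases hb : sTermB e with
        | false =>
            have IH' : EqDeriv ax (proj e)
                (listSum ((strans e).map fun p => lab p.1 * proj p.2)) := by
              simp [sTau, hb] at IH
              exact IH.trans (eZeroAdd hax _)
            exact (eMil hax (.recStar (proj e))).trans
              (EqDeriv.addCongr (.refl 1) (EqDeriv.mulCongr IH' (.refl _)))
        | true =>
            have IH' : EqDeriv ax (proj e)
                ((1:StExp A) + listSum ((strans e).map fun p => lab p.1 * proj p.2)) := by
              simp [sTau, hb] at IH
              exact IH
            have hst : EqDeriv ax ((proj e).star)
                ((listSum ((strans e).map fun p => lab p.1 * proj p.2)).star) :=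
              (EqDeriv.starCongr IH').trans (eMil hax (.trmBody _)).symm
            exact hst.trans ((eMil hax (.recStar _)).trans
              (EqDeriv.addCongr (.refl 1) (EqDeriv.mulCongr (.refl _) hst.symm)))
      refine key.trans ?_
      exact EqDeriv.addCongr (.refl 1) ((sum_map_distr hax _ _ _).trans
        (sum_map_congr hax (G := fun (p : Option A × SExp A) => lab p.1 * (proj p.2 * (proj e).star))
          fun p _ => eMil hax (.assocMul _ _ _)))
  | smul E1 f2 ih1 ih2 =>
      intro hE
      have hh1 := hd_smul hE
      have IH1 := ih1 hh1
      cases hb : sTermB E1 with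
      | false =>
          have hsE : strans (SExp.smul E1 f2) =
              ((strans E1).map fun p => (p.1, SExp.smul p.2 f2)) := by
            simp [strans, hb]
          rw [hsE, List.map_map]
          simp [sTau, hb] at IH1
          have IH1' := IH1.trans (eZeroAdd hax _)
          refine (EqDeriv.mulCongr IH1' (.refl (proj f2))).trans ?_
          refine ((sum_map_distr hax _ _ _).trans
            (sum_map_congr hax (G := fun (p : Option A × SExp A) => lab p.1 * (proj p.2 * proj f2))
              fun p _ => eMil hax (.assocMul _ _ _))).trans ?_
          exact (eZeroAdd hax _).symm
      | true =>
          have hsE : strans (SExp.smul E1 f2) =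
              ((strans E1).map fun p => (p.1, SExp.smul p.2 f2)) ++ [(none, f2)] := by
            simp [strans, hb]
          rw [hsE, List.map_append, List.map_map]
          simp [sTau, hb] at IH1
          refine (EqDeriv.mulCongr IH1 (.refl (proj f2))).trans ?_
          refine (eMil hax (.rdistr 1 _ (proj f2))).trans ?_
          refine (EqDeriv.addCongr (eMil hax (.oneMul (proj f2)))
            ((sum_map_distr hax _ _ _).trans
              (sum_map_congr hax (G := fun (p : Option A × SExp A) => lab p.1 * (proj p.2 * proj f2))
                fun p _ => eMil hax (.assocMul _ _ _)))).trans ?_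
          refine (eComm hax _ _).trans ?_
          refine (EqDeriv.addCongr (.refl _)
            ((eZeroAdd hax (proj f2)).symm.trans
              (EqDeriv.addCongr (.refl 0) (eMil hax (.oneMul (proj f2))).symm))).trans ?_
          refine (sum_append hax
            ((strans E1).map fun (p : Option A × SExp A) => lab p.1 * (proj p.2 * proj f2))
            [1 * proj f2]).symm.trans ?_
          exact (eZeroAdd hax _).symm

/-! ### The candidate solution -/

open Classical in
/-- The candidate solution of the 1-chart interpretation of `f*·g`. -/
noncomputable def sol (e f g : StExp A) (E : SExp A) : StExp A :=
  if E = SExp.mul (SExp.star (emb f)) (emb g) then e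
  else if h : ∃ F, E = SExp.mul (SExp.smul F (SExp.star (emb f))) (emb g) then proj h.choose * e
  else proj E

lemma sol_start (e f g : StExp A) : sol e f g (SExp.mul (SExp.star (emb f)) (emb g)) = e := by
  simp [sol]

lemma sol_F (e f g : StExp A) (F : SExp A) :
    sol e f g (SExp.mul (SExp.smul F (SExp.star (emb f))) (emb g)) = proj F * e := by
  have hne : SExp.mul (SExp.smul F (SExp.star (emb f))) (emb g) ≠
      SExp.mul (SExp.star (emb f)) (emb g) := by simp
  have hex : ∃ F', SExp.mul (SExp.smul F (SExp.star (emb f))) (emb g) =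
      SExp.mul (SExp.smul F' (SExp.star (emb f))) (emb g) := ⟨F, rfl⟩
  simp only [sol]
  rw [if_neg hne, dif_pos hex]
  have hspec := hex.choose_spec
  injection hspec with h1 h2
  injection h1 with h3 h4
  rw [← h3]

lemma sol_G {e f g : StExp A} {G : SExp A} (hG : DerOf g G) : sol e f g G = proj G := by
  have key : ∀ X : SExp A, G ≠ SExp.mul X (emb g) := by
    intro X hX
    obtain ⟨h2, hY, hlt⟩ := derOf_mul_tail hG hX
    rw [emb_inj hY] at hlt
    exact lt_irrefl _ hlt
  simp only [sol]
  rw [if_neg (key _), dif_neg (by rintro ⟨F, hF⟩; exact key _ hF)]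

/-! ### Vertices of the 1-chart interpretation of `f*·g` -/

def Vset (f g : StExp A) (E : SExp A) : Prop :=
  E = SExp.mul (SExp.star (emb f)) (emb g) ∨
    (∃ F, DerOf f F ∧ E = SExp.mul (SExp.smul F (SExp.star (emb f))) (emb g)) ∨
    DerOf g E

lemma V_step {f g : StExp A} {E E' : SExp A} (hV : Vset f g E) (h : sR E E') : Vset f g E' := by
  obtain ⟨l, hs⟩ := h
  rcases hV with rfl | ⟨F, hF, rfl⟩ | hG
  · cases hs with
    | mulL hs1 =>
        cases hs1 with
        | star hs2 => exact Or.inr (Or.inl ⟨_, step_emb hs2, rfl⟩)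
    | mulR ht hs2 => exact Or.inr (Or.inr (step_emb hs2))
  · cases hs with
    | mulL hs1 =>
        cases hs1 with
        | smulL hs2 => exact Or.inr (Or.inl ⟨_, derOf_step hF hs2, rfl⟩)
        | smulT ht => exact Or.inl rfl
    | mulR ht hs2 => cases ht
  · exact Or.inr (Or.inr (derOf_step hG hs))

lemma V_reach {f g : StExp A} {E : SExp A}
    (h : Relation.ReflTransGen sR (SExp.mul (SExp.star (emb f)) (emb g)) E) : Vset f g E := by
  induction h with
  | refl => exact Or.inl rfl
  | tail _ h2 ih => exact V_step ih h2

lemma derOf_of_reach {g : StExp A} {G : SExp A}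
    (h : Relation.ReflTransGen sR (emb g) G) : DerOf g G := by
  induction h with
  | refl => exact DerOf.base g
  | tail _ h2 ih =>
      obtain ⟨l, hs⟩ := h2
      exact derOf_step ih hs

lemma derOf_of_transGen {g : StExp A} {G : SExp A}
    (h : Relation.TransGen sR (emb g) G) : DerOf g G :=
  derOf_of_reach h.to_reflTransGen

/-! ### The solution equations -/

lemma canon (e f g : StExp A) (hf : ¬ Term f) {E : SExp A} (hV : Vset f g E) :
    EqDeriv (fun x y => MilAx x y ∨ (x = e ∧ y = f * e + g)) (sol e f g E)
      (sTau E + listSum ((strans E).map fun p => lab p.1 * sol e f g p.2)) := by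
  set ax : StExp A → StExp A → Prop := fun x y => MilAx x y ∨ (x = e ∧ y = f * e + g) with hdefax
  have hax : ∀ x y : StExp A, MilAx x y → ax x y := fun _ _ h => Or.inl h
  rcases hV with rfl | ⟨F, hF, rfl⟩ | hG
  · -- the start vertex `f* · g`
    have hsE : strans (SExp.mul (SExp.star (emb f)) (emb g)) =
        ((strans (emb f)).map fun p =>
          (p.1, SExp.mul (SExp.smul p.2 (SExp.star (emb f))) (emb g))) ++ strans (emb g) := by
      simp [strans, sTermB, filter_eq_self_of_ns (nsB_emb f), filter_eq_self_of_ns (nsB_emb g),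
        List.map_map, Function.comp_def]
    have htau : sTau (SExp.mul (SExp.star (emb f)) (emb g)) = sTau (emb g) := by
      simp [sTau, sTermB]
    rw [sol_start, hsE, htau, List.map_append, List.map_map]
    have hlist1 : ((strans (emb f)).map ((fun p => lab p.1 * sol e f g p.2) ∘
          (fun p => (p.1, SExp.mul (SExp.smul p.2 (SExp.star (emb f))) (emb g)))))
        = ((strans (emb f)).map fun p => lab p.1 * (proj p.2 * e)) := by
      refine List.map_congr_left fun p _ => ?_
      simp only [Function.comp_apply]
      rw [sol_F]
    have hlist2 : ((strans (emb g)).map fun p => lab p.1 * sol e f g p.2)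
        = ((strans (emb g)).map fun p => lab p.1 * proj p.2) := by
      refine List.map_congr_left fun p hp => ?_
      rw [sol_G (derOf_step (DerOf.base g) (strans_sound _ p hp))]
    rw [hlist1, hlist2]
    have hexf : EqDeriv ax f (listSum ((strans (emb f)).map fun p => lab p.1 * proj p.2)) := by
      have h0 := expansion (ax := ax) hax (emb f) (Hd.pure (nsB_emb f))
      rw [proj_emb] at h0
      have htf : sTau (emb f) = 0 := by
        have hbf : termB f = false := by
          cases htb : termB f
          · rfl
          · exact absurd (termB_iff.mp htb) hf
        simp [sTau, sTermB_emb, hbf]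
      rw [htf] at h0
      exact h0.trans (eZeroAdd hax _)
    have hexg := expansion (ax := ax) hax (emb g) (Hd.pure (nsB_emb g))
    rw [proj_emb] at hexg
    refine (EqDeriv.ax (Or.inr ⟨rfl, rfl⟩)).trans ?_
    refine (EqDeriv.addCongr (EqDeriv.mulCongr hexf (.refl e)) hexg).trans ?_
    refine (EqDeriv.addCongr ((sum_map_distr hax _ _ _).trans
      (sum_map_congr hax (G := fun (p : Option A × SExp A) => lab p.1 * (proj p.2 * e))
        fun p _ => eMil hax (.assocMul _ _ _))) (.refl _)).trans ?_
    refine (eShift hax _ _ _).trans ?_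
    exact EqDeriv.addCongr (.refl _) (sum_append hax _ _).symm
  · -- an interior vertex `(F ⋆ f*) · g`
    have htau0 : sTau (SExp.mul (SExp.smul F (SExp.star (emb f))) (emb g)) = 0 := rfl
    rw [sol_F, htau0]
    have IHF := expansion (ax := ax) hax F (derOf_hd hF)
    cases hb : sTermB F with
    | false =>
        have hsE : strans (SExp.mul (SExp.smul F (SExp.star (emb f))) (emb g)) =
            ((strans F).map fun p =>
              (p.1, SExp.mul (SExp.smul p.2 (SExp.star (emb f))) (emb g))) := by
          simp [strans, sTermB, hb, List.map_map, Function.comp_def]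
        rw [hsE, List.map_map]
        have hlist : ((strans F).map ((fun p => lab p.1 * sol e f g p.2) ∘
              (fun p => (p.1, SExp.mul (SExp.smul p.2 (SExp.star (emb f))) (emb g)))))
            = ((strans F).map fun p => lab p.1 * (proj p.2 * e)) := by
          refine List.map_congr_left fun p _ => ?_
          simp only [Function.comp_apply]
          rw [sol_F]
        rw [hlist]
        simp [sTau, hb] at IHF
        have IHF' := IHF.trans (eZeroAdd hax _)
        refine (EqDeriv.mulCongr IHF' (.refl e)).trans ?_
        refine ((sum_map_distr hax _ _ _).trans
          (sum_map_congr hax (G := fun (p : Option A × SExp A) => lab p.1 * (proj p.2 * e))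
            fun p _ => eMil hax (.assocMul _ _ _))).trans ?_
        exact (eZeroAdd hax _).symm
    | true =>
        have hsE : strans (SExp.mul (SExp.smul F (SExp.star (emb f))) (emb g)) =
            ((strans F).map fun p =>
              (p.1, SExp.mul (SExp.smul p.2 (SExp.star (emb f))) (emb g))) ++
              [(none, SExp.mul (SExp.star (emb f)) (emb g))] := by
          simp [strans, sTermB, hb, List.map_map, Function.comp_def]
        rw [hsE, List.map_append, List.map_map]
        have hlist : ((strans F).map ((fun p => lab p.1 * sol e f g p.2) ∘
              (fun p => (p.1, SExp.mul (SExp.smul p.2 (SExp.star (emb f))) (emb g)))))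
            = ((strans F).map fun p => lab p.1 * (proj p.2 * e)) := by
          refine List.map_congr_left fun p _ => ?_
          simp only [Function.comp_apply]
          rw [sol_F]
        have hsingle : ([((none : Option A), SExp.mul (SExp.star (emb f)) (emb g))].map
            fun p => lab p.1 * sol e f g p.2) = [1 * e] := by
          simp [lab, sol_start]
        rw [hlist, hsingle]
        simp [sTau, hb] at IHF
        refine (EqDeriv.mulCongr IHF (.refl e)).trans ?_
        refine (eMil hax (.rdistr 1 _ e)).trans ?_
        refine (EqDeriv.addCongr (eMil hax (.oneMul e))
          ((sum_map_distr hax _ _ _).trans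
            (sum_map_congr hax (G := fun (p : Option A × SExp A) => lab p.1 * (proj p.2 * e))
              fun p _ => eMil hax (.assocMul _ _ _)))).trans ?_
        refine (eComm hax _ _).trans ?_
        refine (EqDeriv.addCongr (.refl _)
          ((eZeroAdd hax e).symm.trans
            (EqDeriv.addCongr (.refl 0) (eMil hax (.oneMul e)).symm))).trans ?_
        refine (sum_append hax
          ((strans F).map fun (p : Option A × SExp A) => lab p.1 * (proj p.2 * e))
          [1 * e]).symm.trans ?_
        exact (eZeroAdd hax _).symm
  · -- a derivative of `g`
    rw [sol_G hG]
    have hlist : ((strans E).map fun p => lab p.1 * sol e f g p.2)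
        = ((strans E).map fun p => lab p.1 * proj p.2) :=
      List.map_congr_left fun p hp => by
        rw [sol_G (derOf_step hG (strans_sound _ p hp))]
    rw [hlist]
    exact expansion hax E (derOf_hd hG)
end Statement14Aux
end RegEx
open RegEx in
/-- `e` is the principal value of a `(Mil⁻ + {e = f·e + g})`-provable
solution of the 1-chart interpretation of `f*·g`, given concretely as stated. -/
theorem stmt_14 {A : Type} (e f g : StExp A) (hf : ¬ Term f) :
    ∃ s : SExp A → StExp A,
      s (SExp.mul (SExp.star (emb f)) (emb g)) = e ∧
      (∀ F : SExp A, Relation.TransGen sR (emb f) F →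
        s (SExp.mul (SExp.smul F (SExp.star (emb f))) (emb g)) = proj F * e) ∧
      (∀ G : SExp A, Relation.TransGen sR (emb g) G → s G = proj G) ∧
      (∀ E : SExp A,
        Relation.ReflTransGen sR (SExp.mul (SExp.star (emb f)) (emb g)) E →
        ∀ l : List (Option A × SExp A),
          (∀ p : Option A × SExp A, p ∈ l ↔ SStep E p.1 p.2) → l.Nodup →
          EqDeriv (fun x y => MilAx x y ∨ (x = e ∧ y = f * e + g)) (s E)
            (sTau E + listSum (l.map fun p => lab p.1 * s p.2))) := by
  have hax : ∀ x y : StExp A, MilAx x y →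
      (fun x y => MilAx x y ∨ (x = e ∧ y = f * e + g)) x y := fun _ _ h => Or.inl h
  refine ⟨sol e f g, sol_start e f g, fun F _ => sol_F e f g F,
    fun G hG => sol_G (derOf_of_transGen hG), ?_⟩
  intro E hreach l hl _
  refine (canon e f g hf (V_reach hreach)).trans
    (EqDeriv.addCongr (.refl _) (sum_memEq hax ?_))
  intro x
  simp only [List.mem_map]
  constructor
  · rintro ⟨p, hp, rfl⟩
    exact ⟨p, (hl p).mpr (strans_sound _ p hp), rfl⟩
  · rintro ⟨⟨l0, E0⟩, hp, rfl⟩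
    exact ⟨(l0, E0), strans_complete ((hl (l0, E0)).mp hp), rfl⟩
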